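/- Let d ≥ 1 be an integer. Then the operator L_{−1} has a complete polynomial basis of eigenfunctions: every real polynomial in d variables is a finite linear combination of polynomials P, each of which satisfies L_{−1} P = −m(m+d−2) P for some nonnegative integer m. -/

import Mathlib

open MvPolynomial

/-- The Laplacian `Δ = ∑ ∂²/∂xᵢ²` acting on polynomials in `d` variables. -/
noncomputable def lap {d : ℕ} (P : MvPolynomial (Fin d) ℝ) : MvPolynomial (Fin d) ℝ :=
  ∑ i, pderiv i (pderiv i P)

/-- The Euler operator `⟨x,∇⟩ = ∑ xᵢ ∂/∂xᵢ` acting on polynomials in `d` variables. -/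
noncomputable def eulerOp {d : ℕ} (P : MvPolynomial (Fin d) ℝ) : MvPolynomial (Fin d) ℝ :=
  ∑ i, X i * pderiv i P

/-- The operator `L_μ P = ΔP − ⟨x,∇⟩²P − (2μ+d)⟨x,∇⟩P`. -/
noncomputable def Lop (d : ℕ) (μ : ℝ) (P : MvPolynomial (Fin d) ℝ) : MvPolynomial (Fin d) ℝ :=
  lap P - eulerOp (eulerOp P) - (2 * μ + (d : ℝ)) • eulerOp P

/-- The polynomial `‖x‖² = x₁² + ⋯ + x_d²`. -/
noncomputable def normSq (d : ℕ) : MvPolynomial (Fin d) ℝ := ∑ i, X i ^ 2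

namespace Stmt9

variable {d : ℕ}

lemma degree_fin (v : Fin d →₀ ℕ) : v.degree = ∑ i, v i :=
  Finset.sum_subset (Finset.subset_univ _) (fun i _ hi => Finsupp.notMem_support_iff.mp hi)

lemma euler_sum {α : Type*} (s : Finset α) (f : α → MvPolynomial (Fin d) ℝ) :
    eulerOp (∑ a ∈ s, f a) = ∑ a ∈ s, eulerOp (f a) := by
  simp only [eulerOp, map_sum, Finset.mul_sum]
  exact Finset.sum_comm

lemma euler_add (P Q : MvPolynomial (Fin d) ℝ) :
    eulerOp (P + Q) = eulerOp P + eulerOp Q := by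
  simp only [eulerOp, map_add, mul_add, Finset.sum_add_distrib]

lemma euler_smul (c : ℝ) (P : MvPolynomial (Fin d) ℝ) :
    eulerOp (c • P) = c • eulerOp P := by
  simp only [eulerOp, Derivation.map_smul, Finset.smul_sum, mul_smul_comm]

lemma lap_sum {α : Type*} (s : Finset α) (f : α → MvPolynomial (Fin d) ℝ) :
    lap (∑ a ∈ s, f a) = ∑ a ∈ s, lap (f a) := by
  simp only [lap, map_sum]
  exact Finset.sum_comm

lemma lap_add (P Q : MvPolynomial (Fin d) ℝ) : lap (P + Q) = lap P + lap Q := by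
  simp only [lap, map_add, Finset.sum_add_distrib]

lemma lap_smul (c : ℝ) (P : MvPolynomial (Fin d) ℝ) : lap (c • P) = c • lap P := by
  simp only [lap, Derivation.map_smul, Finset.smul_sum]

lemma Lop_add (μ : ℝ) (P Q : MvPolynomial (Fin d) ℝ) :
    Lop d μ (P + Q) = Lop d μ P + Lop d μ Q := by
  simp only [Lop, lap_add, euler_add, smul_add]
  abel

lemma euler_monomial (v : Fin d →₀ ℕ) (a : ℝ) :
    eulerOp (monomial v a) = ((v.degree : ℕ) : ℝ) • monomial v a := by
  have key : ∀ i : Fin d, X i * pderiv i (monomial v a) = ((v i : ℕ) : ℝ) • monomial v a := by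
    intro i
    rw [pderiv_monomial]
    by_cases h : v i = 0
    · simp [h]
    · have hX : (X i : MvPolynomial (Fin d) ℝ) = monomial (Finsupp.single i 1) 1 := rfl
      have hle : Finsupp.single i 1 ≤ v :=
        Finsupp.single_le_iff.mpr (Nat.one_le_iff_ne_zero.mpr h)
      rw [hX, monomial_mul, one_mul, smul_monomial]
      congr 1
      · rw [add_comm, tsub_add_cancel_of_le hle]
      · rw [smul_eq_mul, mul_comm]
  rw [eulerOp]
  rw [Finset.sum_congr rfl (fun i _ => key i), ← Finset.sum_smul]
  congr 1
  rw [degree_fin]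
  push_cast
  rfl

lemma euler_isHomog {m : ℕ} {P : MvPolynomial (Fin d) ℝ} (h : P.IsHomogeneous m) :
    eulerOp P = (m : ℝ) • P := by
  conv_lhs => rw [← P.support_sum_monomial_coeff]
  conv_rhs => rw [← P.support_sum_monomial_coeff]
  rw [euler_sum, Finset.smul_sum]
  refine Finset.sum_congr rfl fun v hv => ?_
  have hdeg : v.degree = m := by
    rw [Finsupp.degree_eq_weight_one]
    exact h (mem_support_iff.mp hv)
  rw [euler_monomial, hdeg]

lemma pderiv_isHomog {m : ℕ} {P : MvPolynomial (Fin d) ℝ} (i : Fin d)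
    (h : P.IsHomogeneous (m + 1)) : (pderiv i P).IsHomogeneous m := by
  conv_lhs => rw [← P.support_sum_monomial_coeff]
  rw [map_sum]
  refine Submodule.sum_mem (homogeneousSubmodule (Fin d) ℝ m) fun v hv => ?_
  rw [pderiv_monomial]
  by_cases hvi : v i = 0
  · rw [hvi]
    simp only [Nat.cast_zero, mul_zero, monomial_zero]
    exact (homogeneousSubmodule (Fin d) ℝ m).zero_mem
  · have hdeg : v.degree = m + 1 := by
      rw [Finsupp.degree_eq_weight_one]
      exact h (mem_support_iff.mp hv)
    refine isHomogeneous_monomial _ ?_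
    rw [degree_fin] at hdeg ⊢
    rw [← Finset.add_sum_erase _ _ (Finset.mem_univ i)] at hdeg ⊢
    have hrest : ∑ j ∈ Finset.univ.erase i, ((v - Finsupp.single i 1) : Fin d →₀ ℕ) j
        = ∑ j ∈ Finset.univ.erase i, v j := by
      refine Finset.sum_congr rfl fun j hj => ?_
      have hji : j ≠ i := (Finset.mem_erase.mp hj).1
      rw [Finsupp.tsub_apply, Finsupp.single_eq_of_ne' (Ne.symm hji), Nat.sub_zero]
    rw [hrest]
    have hvi' : ((v - Finsupp.single i 1) : Fin d →₀ ℕ) i = v i - 1 := by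
      rw [Finsupp.tsub_apply, Finsupp.single_eq_same]
    rw [hvi']
    omega

lemma pderiv_isHomog0 {P : MvPolynomial (Fin d) ℝ} (i : Fin d)
    (h : P.IsHomogeneous 0) : pderiv i P = 0 := by
  conv_lhs => rw [← P.support_sum_monomial_coeff]
  rw [map_sum]
  refine Finset.sum_eq_zero fun v hv => ?_
  have hdeg : v.degree = 0 := by
    rw [Finsupp.degree_eq_weight_one]
    exact h (mem_support_iff.mp hv)
  have : v = 0 := (Finsupp.degree_eq_zero_iff v).mp hdeg
  subst this
  rw [monomial_zero', pderiv_C]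

lemma lap_isHomog {m : ℕ} {P : MvPolynomial (Fin d) ℝ} (h : P.IsHomogeneous (m + 2)) :
    (lap P).IsHomogeneous m := by
  refine Submodule.sum_mem (homogeneousSubmodule (Fin d) ℝ m) fun i _ => ?_
  exact pderiv_isHomog i (pderiv_isHomog i h)

lemma lap_zero0 {P : MvPolynomial (Fin d) ℝ} (h : P.IsHomogeneous 0) : lap P = 0 :=
  Finset.sum_eq_zero fun i _ => by rw [pderiv_isHomog0 i h, map_zero]

lemma lap_zero1 {P : MvPolynomial (Fin d) ℝ} (h : P.IsHomogeneous 1) : lap P = 0 :=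
  Finset.sum_eq_zero fun i _ => by
    rw [pderiv_isHomog0 i (pderiv_isHomog (m := 0) i h)]

noncomputable def lam (d m : ℕ) : ℝ := (m : ℝ) * ((m : ℝ) + (d : ℝ) - 2)

lemma Lop_homog {m : ℕ} {P : MvPolynomial (Fin d) ℝ} (h : P.IsHomogeneous m) :
    Lop d (-1) P = lap P - lam d m • P := by
  unfold Lop
  rw [euler_isHomog h, euler_smul, euler_isHomog h]
  unfold lam
  module



noncomputable def fixP (d n : ℕ) : ℕ → MvPolynomial (Fin d) ℝ → MvPolynomial (Fin d) ℝ
  | 0, Q => Q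
  | 1, Q => Q
  | (j+2), Q => Q + fixP d n j ((lam d j - lam d n)⁻¹ • lap Q)

lemma lam_ne (hd : 1 ≤ d) {j n : ℕ} (h : j + 2 ≤ n) : lam d j - lam d n ≠ 0 := by
  have hj : (j : ℝ) + 2 ≤ (n : ℝ) := by exact_mod_cast h
  have hd' : (1 : ℝ) ≤ (d : ℝ) := by exact_mod_cast hd
  have hpos : lam d n - lam d j > 0 := by
    unfold lam
    nlinarith [Nat.cast_nonneg (α := ℝ) j]
  intro hc
  rw [sub_eq_zero] at hc
  rw [hc] at hpos
  linarith

lemma key (hd : 1 ≤ d) : ∀ (j n : ℕ), j ≤ n → ∀ Q : MvPolynomial (Fin d) ℝ,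
    Q.IsHomogeneous j →
    Lop d (-1) (fixP d n j Q) + lam d n • fixP d n j Q = (lam d n - lam d j) • Q
  | 0, n, _, Q, hQ => by
    show Lop d (-1) Q + lam d n • Q = (lam d n - lam d 0) • Q
    rw [Lop_homog hQ, lap_zero0 hQ]
    module
  | 1, n, _, Q, hQ => by
    show Lop d (-1) Q + lam d n • Q = (lam d n - lam d 1) • Q
    rw [Lop_homog hQ, lap_zero1 hQ]
    module
  | (j+2), n, hn, Q, hQ => by
    have hQ' : ((lam d j - lam d n)⁻¹ • lap Q).IsHomogeneous j :=
      (homogeneousSubmodule (Fin d) ℝ j).smul_mem _ (lap_isHomog hQ)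
    have ih := key hd j n (by omega) _ hQ'
    show Lop d (-1) (Q + fixP d n j ((lam d j - lam d n)⁻¹ • lap Q)) +
        lam d n • (Q + fixP d n j ((lam d j - lam d n)⁻¹ • lap Q))
        = (lam d n - lam d (j+2)) • Q
    rw [Lop_add]
    have hc : (lam d n - lam d j) * (lam d j - lam d n)⁻¹ = -1 := by
      rw [← neg_sub (lam d j), neg_mul, mul_inv_cancel₀ (lam_ne hd hn)]
    calc Lop d (-1) Q + Lop d (-1) (fixP d n j ((lam d j - lam d n)⁻¹ • lap Q)) +
          lam d n • (Q + fixP d n j ((lam d j - lam d n)⁻¹ • lap Q))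
        = (Lop d (-1) Q + lam d n • Q) +
          (Lop d (-1) (fixP d n j ((lam d j - lam d n)⁻¹ • lap Q)) +
           lam d n • fixP d n j ((lam d j - lam d n)⁻¹ • lap Q)) := by module
      _ = (lap Q - lam d (j+2) • Q + lam d n • Q) +
          (lam d n - lam d j) • ((lam d j - lam d n)⁻¹ • lap Q) := by
            rw [ih, Lop_homog hQ]
      _ = (lam d n - lam d (j+2)) • Q := by
            rw [smul_smul, hc]
            module

lemma fix_mem (M : Submodule ℝ (MvPolynomial (Fin d) ℝ)) :
    ∀ (k n : ℕ) (Q : MvPolynomial (Fin d) ℝ), Q.IsHomogeneous k →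
    (∀ i ≤ k, ∀ R : MvPolynomial (Fin d) ℝ, R.IsHomogeneous i → R ∈ M) →
    fixP d n k Q ∈ M
  | 0, n, Q, hQ, hM => hM 0 le_rfl Q hQ
  | 1, n, Q, hQ, hM => hM 1 le_rfl Q hQ
  | (k+2), n, Q, hQ, hM => by
    show Q + fixP d n k ((lam d k - lam d n)⁻¹ • lap Q) ∈ M
    refine M.add_mem (hM (k+2) le_rfl Q hQ) ?_
    exact fix_mem M k n _
      ((homogeneousSubmodule (Fin d) ℝ k).smul_mem _ (lap_isHomog hQ))
      (fun i hi => hM i (by omega))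

set_option maxHeartbeats 1000000 in
lemma homog_mem_span (hd : 1 ≤ d) (j : ℕ) :
    ∀ Q : MvPolynomial (Fin d) ℝ, Q.IsHomogeneous j →
    Q ∈ Submodule.span ℝ {P : MvPolynomial (Fin d) ℝ |
        ∃ m : ℕ, Lop d (-1) P = (-(m : ℝ) * ((m : ℝ) + (d : ℝ) - 2)) • P} := by
  induction j using Nat.strong_induction_on with
  | _ j ih =>
    intro Q hQ
    have hfix : fixP d j j Q ∈ {P : MvPolynomial (Fin d) ℝ |
        ∃ m : ℕ, Lop d (-1) P = (-(m : ℝ) * ((m : ℝ) + (d : ℝ) - 2)) • P} := by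
      refine ⟨j, ?_⟩
      have hk := key hd j j le_rfl Q hQ
      rw [sub_self, zero_smul] at hk
      have := eq_neg_of_add_eq_zero_left hk
      rw [this]
      rw [show (-(j : ℝ) * ((j : ℝ) + (d : ℝ) - 2)) = -(lam d j) from by unfold lam; ring]
      rw [neg_smul]
    match j, hQ, ih with
    | 0, hQ, _ => exact Submodule.subset_span hfix
    | 1, hQ, _ => exact Submodule.subset_span hfix
    | (k+2), hQ, ih =>
      have hrest : fixP d (k+2) k ((lam d k - lam d (k+2))⁻¹ • lap Q) ∈
          Submodule.span ℝ {P : MvPolynomial (Fin d) ℝ |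
            ∃ m : ℕ, Lop d (-1) P = (-(m : ℝ) * ((m : ℝ) + (d : ℝ) - 2)) • P} :=
        fix_mem _ k (k+2) _
          ((homogeneousSubmodule (Fin d) ℝ k).smul_mem _ (lap_isHomog hQ))
          (fun i hi R hR => ih i (by omega) R hR)
      have hQeq : Q = fixP d (k+2) (k+2) Q -
          fixP d (k+2) k ((lam d k - lam d (k+2))⁻¹ • lap Q) := by
        show Q = Q + fixP d (k+2) k ((lam d k - lam d (k+2))⁻¹ • lap Q) - _
        abel
      rw [hQeq]
      exact Submodule.sub_mem _ (Submodule.subset_span hfix) hrest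

end Stmt9

/-- the operator `L_{−1}` has a complete polynomial basis of eigenfunctions:
every polynomial is in the span of the polynomials `P` satisfying
`L_{−1} P = −m(m+d−2) P` for some nonnegative integer `m`. -/
theorem stmt9 (d : ℕ) (hd : 1 ≤ d) :
    Submodule.span ℝ {P : MvPolynomial (Fin d) ℝ |
        ∃ m : ℕ, Lop d (-1) P = (-(m : ℝ) * ((m : ℝ) + (d : ℝ) - 2)) • P} = ⊤ := by
  rw [eq_top_iff]
  rintro P -
  induction P using MvPolynomial.induction_on' with
  | monomial u a => exact Stmt9.homog_mem_span hd u.degree _ (isHomogeneous_monomial a rfl)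
  | add p q hp hq => exact Submodule.add_mem _ hp hq
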